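/- If (X,A) admits a representation as an NDR-pair via maps u : X → [0,1] and h : X × [0,1] → X with u⁻¹(1) = A, h_t restricted to A equal to the identity, h₀ = id, and h₁(u⁻¹((0,1])) ⊆ A, then the inclusion A ↪ X is a cofibration (has the homotopy extension property). -/

import Mathlib

open unitInterval

/-- If `(X, A)` admits a representation as an NDR-pair via `u : X → [0,1]` and a
homotopy `h : X × I → X` with `u⁻¹(1) = A`, `h_t|_A = id`, `h₀ = id`, and
`h₁(u⁻¹((0,1])) ⊆ A`, then the inclusion `A ↪ X` has the homotopy extension
property: any map `f : X → Y` together with a homotopy on `A` starting at `f|_A`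
extends to a homotopy on all of `X` starting at `f`. -/
theorem stmt5 {X : Type*} [TopologicalSpace X] (A : Set X) (hA : IsClosed A)
    (u : C(X, I)) (h : C(X × I, X))
    (hu : u ⁻¹' {1} = A)
    (hht : ∀ a ∈ A, ∀ t : I, h (a, t) = a)
    (hh0 : ∀ x : X, h (x, 0) = x)
    (hh1 : ∀ x : X, (0 : ℝ) < (u x : ℝ) → h (x, 1) ∈ A) :
    ∀ (Y : Type*) [TopologicalSpace Y] (f : C(X, Y)) (K : C(A × I, Y)),
      (∀ a : A, K (a, 0) = f a) →
      ∃ G : C(X × I, Y), (∀ x : X, G (x, 0) = f x) ∧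
        ∀ (a : A) (t : I), G ((a : X), t) = K (a, t) := by
  classical
  intro Y _ f K hK0
  -- v x = 1 - u x
  set v : X → ℝ := fun x => 1 - (u x : ℝ) with hv_def
  have hv_cont : Continuous v := by
    exact continuous_const.sub (continuous_subtype_val.comp u.continuous)
  have hv_nonneg : ∀ x, 0 ≤ v x := fun x => by
    simp only [hv_def, sub_nonneg]; exact (u x).2.2
  have hv_le_one : ∀ x, v x ≤ 1 := fun x => by
    simp only [hv_def]; linarith [(u x).2.1]
  have hvA : ∀ x, v x = 0 ↔ x ∈ A := by
    intro x
    rw [← hu]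
    simp only [hv_def, sub_eq_zero, Set.mem_preimage, Set.mem_singleton_iff]
    constructor
    · intro hx; exact Subtype.ext hx.symm
    · intro hx; rw [hx]; norm_num
  -- the time reparametrisations
  set θ : X × I → I := fun p => Set.projIcc 0 1 zero_le_one (min 1 ((p.2 : ℝ) / v p.1)) with hθ_def
  set sg : X × I → I := fun p => Set.projIcc 0 1 zero_le_one ((p.2 : ℝ) - v p.1) with hsg_def
  have hsg_cont : Continuous sg := by
    exact continuous_projIcc.comp ((continuous_subtype_val.comp continuous_snd).sub
      (hv_cont.comp continuous_fst))
  -- extended K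
  set KE : X × I → Y := fun p => if hx : p.1 ∈ A then K (⟨p.1, hx⟩, p.2) else f p.1 with hKE_def
  have hKE_eq : ∀ (x : X) (hx : x ∈ A) (t : I), KE (x, t) = K (⟨x, hx⟩, t) := by
    intro x hx t; simp only [hKE_def]; rw [dif_pos hx]
  have hKE_cont : ContinuousOn KE (A ×ˢ (Set.univ : Set I)) := by
    rw [continuousOn_iff_continuous_restrict]
    have : Set.domRestrict (A ×ˢ (Set.univ : Set I)) KE =
        fun q : ↥(A ×ˢ (Set.univ : Set I)) => K (⟨q.1.1, q.2.1⟩, q.1.2) := by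
      funext q
      exact hKE_eq q.1.1 q.2.1 q.1.2
    rw [this]
    exact K.continuous.comp (Continuous.prodMk
      (Continuous.subtype_mk (continuous_fst.comp continuous_subtype_val) _)
      (continuous_snd.comp continuous_subtype_val))
  -- the two pieces
  set g1 : X × I → Y := fun p => f (h (p.1, θ p)) with hg1_def
  set g2 : X × I → Y := fun p => KE (h (p.1, 1), sg p) with hg2_def
  -- the region where u > 0
  have hUopen : IsOpen {x : X | 0 < (u x : ℝ)} := by
    have : {x : X | 0 < (u x : ℝ)} = (fun x => (u x : ℝ)) ⁻¹' (Set.Ioi 0) := rfl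
    rw [this]
    exact isOpen_Ioi.preimage (continuous_subtype_val.comp u.continuous)
  have hclos : ∀ x ∈ closure {x : X | 0 < (u x : ℝ)}, h (x, 1) ∈ A := by
    intro x hx
    have hc : Continuous fun y : X => h (y, 1) :=
      h.continuous.comp (Continuous.prodMk continuous_id continuous_const)
    have : (fun y : X => h (y, 1)) x ∈ closure A :=
      map_mem_closure (f := fun y : X => h (y, 1)) hc hx (fun y hy => hh1 y hy)
    rwa [hA.closure_eq] at this
  -- key: points of A are fixed by h at all times; value of g1 on A
  have hg1_at_A : ∀ (x : X), x ∈ A → ∀ t : I, g1 (x, t) = f x := by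
    intro x hx t
    simp only [hg1_def]
    rw [hht x hx _]
  -- continuity of g1 on D1
  have hg1_cont : ContinuousOn g1 {p : X × I | (p.2 : ℝ) ≤ v p.1} := by
    intro p hp
    rcases eq_or_lt_of_le (hv_nonneg p.1) with hv0 | hvpos
    · -- v p.1 = 0 : p.1 ∈ A and p.2 = 0
      have hxA : p.1 ∈ A := (hvA p.1).1 hv0.symm
      have hval : g1 p = f p.1 := by
        obtain ⟨x, t⟩ := p
        exact hg1_at_A x hxA t
      rw [ContinuousWithinAt, hval]
      rw [tendsto_nhds]
      intro N hNopen hNmem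
      -- tube lemma around {p.1} × I inside h ⁻¹' (f ⁻¹' N)
      have hsub : ({p.1} ×ˢ (Set.univ : Set I)) ⊆ h ⁻¹' (f ⁻¹' N) := by
        rintro ⟨x, t⟩ ⟨hx, -⟩
        simp only [Set.mem_singleton_iff] at hx
        subst hx
        simp only [Set.mem_preimage]
        rw [hht p.1 hxA t]
        exact hNmem
      obtain ⟨U, V, hUo, hVo, hU1, hV1, hUV⟩ := generalized_tube_lemma
        isCompact_singleton isCompact_univ
        ((hNopen.preimage f.continuous).preimage h.continuous) hsub
      have hmem : (U ×ˢ (Set.univ : Set I)) ∈ nhdsWithin p {p : X × I | (p.2 : ℝ) ≤ v p.1} := by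
        apply mem_nhdsWithin_of_mem_nhds
        exact (hUo.prod isOpen_univ).mem_nhds ⟨hU1 rfl, trivial⟩
      filter_upwards [hmem] with q hq
      have : (q.1, θ q) ∈ U ×ˢ V := ⟨hq.1, hV1 trivial⟩
      have := hUV this
      simpa only [hg1_def, Set.mem_preimage] using this
    · -- v p.1 > 0 : θ is continuous at p
      apply ContinuousAt.continuousWithinAt
      have hdiv : ContinuousAt (fun p : X × I => min 1 ((p.2 : ℝ) / v p.1)) p :=
        Filter.Tendsto.min continuousAt_const
          (ContinuousAt.div ((continuous_subtype_val.comp continuous_snd).continuousAt)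
            ((hv_cont.comp continuous_fst).continuousAt) (ne_of_gt hvpos))
      have hθc : ContinuousAt θ p := continuous_projIcc.continuousAt.comp hdiv
      exact (f.continuous.comp h.continuous).continuousAt.comp
        (continuousAt_fst.prodMk hθc)
  -- continuity of g2 on D2
  have hg2_cont : ContinuousOn g2
      {p : X × I | v p.1 ≤ (p.2 : ℝ) ∧ p.1 ∈ closure {x : X | 0 < (u x : ℝ)}} := by
    have hψ : Continuous fun p : X × I => ((h (p.1, 1), sg p) : X × I) := by
      exact Continuous.prodMk
        (h.continuous.comp (Continuous.prodMk continuous_fst continuous_const)) hsg_cont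
    apply ContinuousOn.comp hKE_cont hψ.continuousOn
    rintro p ⟨-, hp2⟩
    exact ⟨hclos p.1 hp2, trivial⟩
  -- agreement on overlap
  have hagree : ∀ p : X × I, (p.2 : ℝ) = v p.1 → p.1 ∈ closure {x : X | 0 < (u x : ℝ)} →
      g1 p = g2 p := by
    rintro ⟨x, t⟩ heq hx2
    rcases eq_or_lt_of_le (hv_nonneg x) with hv0 | hvpos
    · have hxA : x ∈ A := (hvA x).1 hv0.symm
      have ht0 : t = 0 := by
        apply Subtype.ext
        show (t : ℝ) = 0
        rw [heq, ← hv0]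
      rw [hg1_at_A x hxA t]
      simp only [hg2_def]
      rw [hht x hxA 1, hKE_eq x hxA]
      have hsg0 : Set.projIcc (0:ℝ) 1 zero_le_one ((t : ℝ) - v x) = 0 := by
        rw [heq, sub_self, Set.projIcc_left]
        exact Set.Icc.mk_zero _
      simp only [hsg_def]
      rw [hsg0, hK0 ⟨x, hxA⟩]
    · have hθ1 : θ (x, t) = 1 := by
        simp only [hθ_def]
        rw [heq, div_self (ne_of_gt hvpos), min_self, Set.projIcc_right]
        exact Set.Icc.mk_one _
      have hsg0 : sg (x, t) = 0 := by
        simp only [hsg_def]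
        rw [heq, sub_self, Set.projIcc_left]
        exact Set.Icc.mk_zero _
      have hmemA : h (x, 1) ∈ A := hclos x hx2
      simp only [hg1_def, hg2_def]
      rw [hθ1, hsg0, hKE_eq _ hmemA, hK0 ⟨h (x, 1), hmemA⟩]
  -- the glued map
  have hD2closed : IsClosed {p : X × I | v p.1 ≤ (p.2 : ℝ) ∧
      p.1 ∈ closure {x : X | 0 < (u x : ℝ)}} := by
    apply IsClosed.inter
    · exact isClosed_le (hv_cont.comp continuous_fst) (continuous_subtype_val.comp continuous_snd)
    · exact isClosed_closure.preimage continuous_fst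
  have hcompl_sub : {p : X × I | ¬ ((p.2 : ℝ) ≤ v p.1)} ⊆
      {p : X × I | v p.1 ≤ (p.2 : ℝ) ∧ p.1 ∈ closure {x : X | 0 < (u x : ℝ)}} := by
    rintro ⟨x, t⟩ hp
    simp only [Set.mem_setOf_eq, not_le] at hp
    refine ⟨le_of_lt hp, subset_closure ?_⟩
    have ht1 : (t : ℝ) ≤ 1 := t.2.2
    simp only [Set.mem_setOf_eq, hv_def]
    by_contra hcon
    push_neg at hcon
    have : (u x : ℝ) = 0 := le_antisymm hcon (u x).2.1
    rw [hv_def] at hp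
    simp only [this] at hp
    linarith
  have hD1closed : IsClosed {p : X × I | (p.2 : ℝ) ≤ v p.1} :=
    isClosed_le (continuous_subtype_val.comp continuous_snd) (hv_cont.comp continuous_fst)
  set Gfun : X × I → Y := fun p => if (p.2 : ℝ) ≤ v p.1 then g1 p else g2 p with hG_def
  have hG_cont : Continuous Gfun := by
    rw [← continuousOn_univ]
    apply ContinuousOn.if
    · rintro p ⟨-, hpf⟩
      have h1 : p ∈ {p : X × I | (p.2 : ℝ) ≤ v p.1} := by
        have := frontier_subset_closure (s := {p : X × I | (p.2 : ℝ) ≤ v p.1}) hpf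
        rwa [hD1closed.closure_eq] at this
      have h2 : p ∈ closure {p : X × I | ¬ ((p.2 : ℝ) ≤ v p.1)} := by
        rw [frontier_eq_closure_inter_closure] at hpf
        exact hpf.2
      have h2' := (hD2closed.closure_subset_iff.2 hcompl_sub) h2
      exact hagree p (le_antisymm h1 h2'.1) h2'.2
    · apply hg1_cont.mono
      rw [hD1closed.closure_eq]
      exact Set.inter_subset_right
    · apply hg2_cont.mono
      intro p hp
      exact (hD2closed.closure_subset_iff.2 hcompl_sub) hp.2
  refine ⟨⟨Gfun, hG_cont⟩, ?_, ?_⟩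
  · intro x
    have h0v : ((0 : I) : ℝ) ≤ v x := by simpa using hv_nonneg x
    simp only [ContinuousMap.coe_mk, hG_def]
    rw [if_pos h0v]
    have hθ0 : θ (x, (0 : I)) = 0 := by
      show Set.projIcc (0:ℝ) 1 zero_le_one (min 1 (((0:I) : ℝ) / v x)) = 0
      rw [Set.Icc.coe_zero, zero_div, min_eq_right (zero_le_one' ℝ), Set.projIcc_left]
      exact Set.Icc.mk_zero _
    simp only [hg1_def]
    rw [hθ0, hh0]
  · intro a t
    have hva : v (a : X) = 0 := (hvA _).2 a.2
    simp only [ContinuousMap.coe_mk, hG_def, hva]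
    by_cases ht : (t : ℝ) ≤ 0
    · rw [if_pos ht]
      have ht0 : t = 0 := Subtype.ext (le_antisymm ht t.2.1)
      rw [hg1_at_A _ a.2, ht0]
      rw [hK0 a]
    · rw [if_neg ht]
      simp only [hg2_def]
      rw [hht _ a.2 1, hKE_eq _ a.2]
      have hsgt : sg ((a : X), t) = t := by
        simp only [hsg_def, hva, sub_zero]
        rw [Set.projIcc_of_mem zero_le_one t.2]
      rw [hsgt, Subtype.coe_eta]
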